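/- Let d, a, c be nonnegative integers with c ≤ min(a, d). The number of a-tuples (v₁, …, v_a) of vectors of (𝔽_q)^d whose linear span has dimension c equals q^{dc + ca − c²} · (q⁻¹)_a (q⁻¹)_d / ( (q⁻¹)_c (q⁻¹)_{a−c} (q⁻¹)_{d−c} ). Equivalently, if v₁, …, v_a are independent uniformly distributed random vectors of (𝔽_q)^d, the probability that the rank of (v₁, …, v_a) equals c is q^{(d−c)(c−a)} (q⁻¹)_a (q⁻¹)_d / ( (q⁻¹)_c (q⁻¹)_{a−c} (q⁻¹)_{d−c} ). -/

import Mathlib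

/-- The Pochhammer symbol `(q⁻¹)_m = ∏_{i=1}^m (1 - q^{-i})`. -/
noncomputable def qPoch (q : ℚ) (m : ℕ) : ℚ :=
  ∏ i ∈ Finset.range m, (1 - q⁻¹ ^ (i + 1))

section Aux

open Submodule Set Module Finset Matrix

variable {F : Type*} [Field F] [Fintype F]

set_option linter.unusedSectionVars false

theorem aux_tuple_rank_transpose {a d : ℕ} (v : Fin a → Fin d → F) :
    finrank F (span F (Set.range (fun i j => v j i))) = finrank F (span F (Set.range v)) := by
  have h3 : (Matrix.of v)ᵀ.rank = (Matrix.of v).rank := Matrix.rank_transpose _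
  rw [Matrix.rank_eq_finrank_span_row, Matrix.rank_eq_finrank_span_row] at h3
  exact h3

theorem aux_card_rank_eq_indep {m n : ℕ} (h : m ≤ n) :
    Nat.card {v : Fin m → (Fin n → F) // finrank F (span F (Set.range v)) = m}
      = ∏ i ∈ range m, (Fintype.card F ^ n - Fintype.card F ^ i) := by
  have e : {v : Fin m → (Fin n → F) // finrank F (span F (Set.range v)) = m}
      ≃ {v : Fin m → (Fin n → F) // LinearIndependent F v} :=
    Equiv.subtypeEquivRight (fun v => by
      rw [linearIndependent_iff_card_eq_finrank_span, Set.finrank, Fintype.card_fin, eq_comm])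
  rw [Nat.card_congr e, card_linearIndependent (by simpa using h)]
  simp only [Module.finrank_fintype_fun_eq_card, Fintype.card_fin]
  rw [Fin.prod_univ_eq_prod_range (fun i => Fintype.card F ^ n - Fintype.card F ^ i)]

theorem aux_span_equiv_comp {M N : Type*} [AddCommGroup M] [AddCommGroup N] [Module F M]
    [Module F N] (e : M →ₗ[F] N) {ι : Type*} (w : ι → M) :
    span F (Set.range (fun i => e (w i))) = Submodule.map e (span F (Set.range w)) := by
  rw [Submodule.map_span, ← Set.range_comp]; rfl

noncomputable def auxFiberEquiv {a c d : ℕ} (W : Submodule F (Fin d → F))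
    (hW : finrank F W = c) :
    {v : Fin a → Fin d → F // span F (Set.range v) = W}
      ≃ {u : Fin a → Fin c → F // finrank F (span F (Set.range u)) = c} := by
  have : FiniteDimensional F W := inferInstance
  have e : W ≃ₗ[F] (Fin c → F) := LinearEquiv.ofFinrankEq _ _ (by simp [hW])
  refine ⟨fun v => ⟨fun i => e ⟨v.1 i, by
      have := subset_span (R := F) (s := Set.range v.1) ⟨i, rfl⟩; rwa [v.2] at this⟩, ?_⟩,
    fun u => ⟨fun i => (e.symm (u.1 i) : Fin d → F), ?_⟩, ?_, ?_⟩
  · set w : Fin a → W := fun i => ⟨v.1 i, by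
      have := subset_span (R := F) (s := Set.range v.1) ⟨i, rfl⟩; rwa [v.2] at this⟩ with hw
    have h1 : span F (Set.range fun i => e (w i)) = Submodule.map e.toLinearMap
        (span F (Set.range w)) := aux_span_equiv_comp _ _
    have h2 : finrank F (Submodule.map e.toLinearMap (span F (Set.range w)))
        = finrank F (span F (Set.range w)) := LinearEquiv.finrank_map_eq _ _
    have h3 : finrank F (Submodule.map W.subtype (span F (Set.range w)))
        = finrank F (span F (Set.range w)) := Submodule.finrank_map_subtype_eq _ _
    have h4 : Submodule.map W.subtype (span F (Set.range w)) = span F (Set.range v.1) :=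
      (aux_span_equiv_comp W.subtype w).symm
    rw [h1, h2, ← h3, h4, v.2, hW]
  · set w : Fin a → W := fun i => e.symm (u.1 i) with hw
    have h1 : span F (Set.range w) = Submodule.map e.symm.toLinearMap
        (span F (Set.range u.1)) := aux_span_equiv_comp _ _
    have h2 : finrank F (span F (Set.range w)) = c := by
      rw [h1, LinearEquiv.finrank_map_eq, u.2]
    have h3 : span F (Set.range w) = ⊤ :=
      Submodule.eq_top_of_finrank_eq (by rw [h2, hW])
    have h4 : span F (Set.range fun i => ((w i : W) : Fin d → F))
        = Submodule.map W.subtype (span F (Set.range w)) := aux_span_equiv_comp W.subtype w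
    rw [h4, h3, Submodule.map_subtype_top]
  · intro v
    apply Subtype.ext; funext i; simp
  · intro u
    apply Subtype.ext; funext i; simp

theorem aux_card_rank_decomp (a d c : ℕ) :
    Nat.card {v : Fin a → Fin d → F // finrank F (span F (Set.range v)) = c}
      = Nat.card {W : Submodule F (Fin d → F) // finrank F W = c}
        * Nat.card {u : Fin a → Fin c → F // finrank F (span F (Set.range u)) = c} := by
  set T := {v : Fin a → Fin d → F // finrank F (span F (Set.range v)) = c} with hT
  let f : T → {W : Submodule F (Fin d → F) // finrank F W = c} :=
    fun v => ⟨span F (Set.range v.1), v.2⟩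
  have g : ∀ W : {W : Submodule F (Fin d → F) // finrank F W = c},
      {x : T // f x = W} ≃ {v : Fin a → Fin d → F // span F (Set.range v) = W.1} :=
    fun W => ⟨fun x => ⟨x.1.1, congrArg Subtype.val x.2⟩,
      fun v => ⟨⟨v.1, by rw [v.2]; exact W.2⟩, Subtype.ext v.2⟩,
      fun x => Subtype.ext (Subtype.ext rfl), fun v => Subtype.ext rfl⟩
  have e : T ≃ ({W : Submodule F (Fin d → F) // finrank F W = c} ×
      {u : Fin a → Fin c → F // finrank F (span F (Set.range u)) = c}) :=
    (Equiv.sigmaFiberEquiv f).symm.trans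
      ((Equiv.sigmaCongrRight (fun W => (g W).trans (auxFiberEquiv W.1 W.2))).trans
        (Equiv.sigmaEquivProd _ _))
  rw [Nat.card_congr e, Nat.card_prod]

theorem aux_card_rank_comm (a d c : ℕ) :
    Nat.card {v : Fin a → Fin d → F // finrank F (span F (Set.range v)) = c}
      = Nat.card {v : Fin d → Fin a → F // finrank F (span F (Set.range v)) = c} :=
  Nat.card_congr ⟨fun v => ⟨fun i j => v.1 j i, (aux_tuple_rank_transpose v.1).trans v.2⟩,
    fun w => ⟨fun i j => w.1 j i, (aux_tuple_rank_transpose w.1).trans w.2⟩,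
    fun v => Subtype.ext rfl, fun w => Subtype.ext rfl⟩

theorem aux_main_count (d a c : ℕ) (hca : c ≤ a) (hcd : c ≤ d) :
    Nat.card {v : Fin a → Fin d → F // finrank F (span F (Set.range v)) = c}
        * ∏ i ∈ range c, (Fintype.card F ^ c - Fintype.card F ^ i)
      = (∏ i ∈ range c, (Fintype.card F ^ d - Fintype.card F ^ i))
        * ∏ i ∈ range c, (Fintype.card F ^ a - Fintype.card F ^ i) := by
  have h1 := aux_card_rank_decomp (F := F) a d c
  have h2 := aux_card_rank_decomp (F := F) c d c
  have h3 : Nat.card {u : Fin a → Fin c → F // finrank F (span F (Set.range u)) = c}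
      = ∏ i ∈ range c, (Fintype.card F ^ a - Fintype.card F ^ i) := by
    rw [aux_card_rank_comm, aux_card_rank_eq_indep hca]
  have h4 : Nat.card {u : Fin c → Fin d → F // finrank F (span F (Set.range u)) = c}
      = ∏ i ∈ range c, (Fintype.card F ^ d - Fintype.card F ^ i) :=
    aux_card_rank_eq_indep hcd
  have h5 : Nat.card {u : Fin c → Fin c → F // finrank F (span F (Set.range u)) = c}
      = ∏ i ∈ range c, (Fintype.card F ^ c - Fintype.card F ^ i) :=
    aux_card_rank_eq_indep le_rfl
  rw [h4, h5] at h2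
  rw [h1, h3, mul_right_comm, ← h2]

end Aux

theorem aux_qPoch_ne_zero {Q : ℚ} (hQ : 1 < Q) (m : ℕ) : qPoch Q m ≠ 0 := by
  have h1 : Q⁻¹ < 1 := inv_lt_one_of_one_lt₀ hQ
  have h0 : (0:ℚ) ≤ Q⁻¹ := by positivity
  refine Finset.prod_ne_zero_iff.2 fun i _ => ?_
  have : Q⁻¹ ^ (i+1) < 1 := pow_lt_one₀ h0 h1 (Nat.succ_ne_zero i)
  intro h; rw [sub_eq_zero] at h; exact absurd h.symm (ne_of_lt this)

theorem aux_qPoch_prod {Q : ℚ} (hQ : Q ≠ 0) : ∀ k n : ℕ, k ≤ n →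
    (∏ i ∈ Finset.range k, (Q^n - Q^i)) * qPoch Q (n-k) = Q^(n*k) * qPoch Q n := by
  intro k
  induction k with
  | zero => intro n _; simp
  | succ k ih =>
    intro n hk
    have hkn : k ≤ n := Nat.le_of_succ_le hk
    have h1 : n - k = (n - (k+1)) + 1 := by omega
    have h2 : qPoch Q (n - k) = qPoch Q (n - (k+1)) * (1 - Q⁻¹^(n-k)) := by
      rw [h1, qPoch, Finset.prod_range_succ, ← qPoch, ← h1]
    have h3 : Q^n - Q^k = Q^n * (1 - Q⁻¹^(n-k)) := by
      have hh : Q^k * Q^(n-k) = Q^n := by rw [← pow_add]; congr 1; omega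
      have hinv : Q^n * Q⁻¹^(n-k) = Q^k := by
        rw [← hh]; field_simp
        rw [← mul_pow, mul_one_div_cancel hQ, one_pow]
      rw [mul_sub, mul_one, hinv]
    have h4 := ih n hkn
    rw [h2] at h4
    have h5 : Q^(n*(k+1)) = Q^(n*k) * Q^n := by rw [← pow_add, Nat.mul_succ]
    rw [Finset.prod_range_succ, h3, h5]
    linear_combination Q^n * h4

/-- The number of `a`-tuples of vectors of `F^d` whose span has dimension `c`, and the
corresponding probability for independent uniform random vectors. -/
theorem statement5 {F : Type*} [Field F] [Fintype F] (d a c : ℕ) (hc : c ≤ min a d) :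
    (Nat.card {v : Fin a → (Fin d → F) //
        Module.finrank F ↥(Submodule.span F (Set.range v)) = c} : ℚ) =
      (Fintype.card F : ℚ) ^ (d * c + c * a - c ^ 2) *
        qPoch (Fintype.card F) a * qPoch (Fintype.card F) d /
        (qPoch (Fintype.card F) c * qPoch (Fintype.card F) (a - c) *
          qPoch (Fintype.card F) (d - c)) ∧
    (Nat.card {v : Fin a → (Fin d → F) //
        Module.finrank F ↥(Submodule.span F (Set.range v)) = c} : ℚ) /
        (Fintype.card F : ℚ) ^ (d * a) =
      (Fintype.card F : ℚ) ^ (((d : ℤ) - c) * ((c : ℤ) - a)) *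
        qPoch (Fintype.card F) a * qPoch (Fintype.card F) d /
        (qPoch (Fintype.card F) c * qPoch (Fintype.card F) (a - c) *
          qPoch (Fintype.card F) (d - c)) := by
  have hca : c ≤ a := le_trans hc (min_le_left _ _)
  have hcd : c ≤ d := le_trans hc (min_le_right _ _)
  set q := Fintype.card F with hq
  set Q : ℚ := (q : ℚ) with hQdef
  set N := Nat.card {v : Fin a → (Fin d → F) //
      Module.finrank F ↥(Submodule.span F (Set.range v)) = c} with hN
  have hq1 : 1 < q := Fintype.one_lt_card
  have hQ1 : (1:ℚ) < Q := by rw [hQdef]; exact_mod_cast hq1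
  have hQ0 : Q ≠ 0 := by linarith
  have hpoch : ∀ m, qPoch Q m ≠ 0 := fun m => aux_qPoch_ne_zero hQ1 m
  have hden : qPoch Q c * qPoch Q (a-c) * qPoch Q (d-c) ≠ 0 :=
    mul_ne_zero (mul_ne_zero (hpoch c) (hpoch (a-c))) (hpoch (d-c))
  have hcount := aux_main_count (F := F) d a c hca hcd
  have hcast : ∀ n : ℕ, c ≤ n →
      ((∏ i ∈ Finset.range c, (q^n - q^i) : ℕ) : ℚ) = ∏ i ∈ Finset.range c, (Q^n - Q^i) := by
    intro n hn
    rw [Nat.cast_prod]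
    refine Finset.prod_congr rfl fun i hi => ?_
    rw [Nat.cast_sub (Nat.pow_le_pow_right (le_of_lt hq1)
      (le_trans (le_of_lt (Finset.mem_range.1 hi)) hn))]
    push_cast
    ring
  have hNQ : (N:ℚ) * ∏ i ∈ Finset.range c, (Q^c - Q^i)
      = (∏ i ∈ Finset.range c, (Q^d - Q^i)) * ∏ i ∈ Finset.range c, (Q^a - Q^i) := by
    rw [← hcast c le_rfl, ← hcast d hcd, ← hcast a hca]
    exact_mod_cast hcount
  have hPc : (∏ i ∈ Finset.range c, (Q^c - Q^i)) = Q^(c*c) * qPoch Q c := by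
    have h := aux_qPoch_prod hQ0 c c le_rfl
    simpa [qPoch] using h
  have hPd := aux_qPoch_prod hQ0 c d hcd
  have hPa := aux_qPoch_prod hQ0 c a hca
  have hzy : c*c ≤ c*a := Nat.mul_le_mul_left c hca
  have hle : c^2 ≤ d*c + c*a := by
    rw [pow_two]; exact hzy.trans (Nat.le_add_left _ _)
  have key : (N:ℚ) * (qPoch Q c * qPoch Q (a-c) * qPoch Q (d-c)) * Q^(c*c)
      = Q^(d*c) * qPoch Q d * (Q^(a*c) * qPoch Q a) := by
    linear_combination (qPoch Q (a-c) * qPoch Q (d-c)) * hNQ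
      - ((N:ℚ) * qPoch Q (a-c) * qPoch Q (d-c)) * hPc
      + ((∏ i ∈ Finset.range c, (Q^a - Q^i)) * qPoch Q (a-c)) * hPd
      + (Q^(d*c) * qPoch Q d) * hPa
  have hE : Q^(d*c + c*a - c^2) * Q^(c*c) = Q^(d*c) * Q^(a*c) := by
    rw [← pow_add, ← pow_add]
    congr 1
    rw [pow_two, Nat.mul_comm a c]
    exact Nat.sub_add_cancel (hzy.trans (Nat.le_add_left _ _))
  have G1 : (N:ℚ) = Q ^ (d * c + c * a - c ^ 2) * qPoch Q a * qPoch Q d /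
      (qPoch Q c * qPoch Q (a - c) * qPoch Q (d - c)) := by
    rw [eq_div_iff hden]
    apply mul_right_cancel₀ (pow_ne_zero (c*c) hQ0)
    calc (N:ℚ) * (qPoch Q c * qPoch Q (a-c) * qPoch Q (d-c)) * Q^(c*c)
        = Q^(d*c) * qPoch Q d * (Q^(a*c) * qPoch Q a) := key
      _ = (Q^(d*c) * Q^(a*c)) * qPoch Q a * qPoch Q d := by ring
      _ = (Q^(d*c + c*a - c^2) * Q^(c*c)) * qPoch Q a * qPoch Q d := by rw [hE]
      _ = Q ^ (d * c + c * a - c ^ 2) * qPoch Q a * qPoch Q d * Q^(c*c) := by ring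
  refine ⟨G1, ?_⟩
  have hQe : (Q:ℚ)^(d*c + c*a - c^2) = Q ^ (((d:ℤ)-c)*((c:ℤ)-a)) * Q^(d*a) := by
    rw [← zpow_natCast Q (d*c + c*a - c^2), ← zpow_natCast Q (d*a), ← zpow_add₀ hQ0]
    congr 1
    rw [Nat.cast_sub hle]
    push_cast
    ring
  have hpow : (Q:ℚ)^(d*a) ≠ 0 := pow_ne_zero _ hQ0
  rw [G1, hQe]
  field_simp
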